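/- Let p, q ∈ H^n_κ and let v be a nonzero tangent vector at q. Then the quantity −⟨p, κ·q + (√κ/‖v‖)·v⟩_L is strictly positive, and the Busemann limit on H^n_κ is given by: t ↦ d_κ(p, exp_q(tv)) − ‖v‖·t tends to (1/√κ)·ln(−⟨p, κ·q + (√κ/‖v‖)·v⟩_L) as t → +∞. -/

import Mathlib

open Filter Topology

/-- The Lorentz bilinear form on `ℝ^{n+1}`:
`⟨x,y⟩_L = (∑_{i=1}^n x_i y_i) − x_{n+1} y_{n+1}`. -/
noncomputable def lform (n : ℕ) (x y : Fin (n + 1) → ℝ) : ℝ :=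
  (∑ i : Fin n, x i.castSucc * y i.castSucc) - x (Fin.last n) * y (Fin.last n)

/-- The κ-hyperbolic space form
`H^n_κ = {p ∈ ℝ^{n+1} : ⟨p,p⟩_L = −1/κ, p_{n+1} > 0}`. -/
def Hyp (n : ℕ) (κ : ℝ) : Set (Fin (n + 1) → ℝ) :=
  {p | lform n p p = -(1 / κ) ∧ 0 < p (Fin.last n)}

/-- Inverse hyperbolic cosine: `arcosh x = log (x + √(x² − 1))`. -/
noncomputable def arcosh (x : ℝ) : ℝ :=
  Real.log (x + Real.sqrt (x ^ 2 - 1))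

/-- Intrinsic distance on `H^n_κ`: `d_κ(p,q) = (1/√κ)·arcosh(−κ⟨p,q⟩_L)`. -/
noncomputable def hdist (n : ℕ) (κ : ℝ) (p q : Fin (n + 1) → ℝ) : ℝ :=
  (1 / Real.sqrt κ) * arcosh (-(κ * lform n p q))

/-- Lorentzian norm of a spacelike vector: `‖v‖ = √⟨v,v⟩_L`. -/
noncomputable def hnorm (n : ℕ) (v : Fin (n + 1) → ℝ) : ℝ :=
  Real.sqrt (lform n v v)

/-- The geodesic `exp_q(tv) = cosh(√κ t‖v‖)·q + (sinh(√κ t‖v‖)/(√κ‖v‖))·v`. -/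
noncomputable def hexp (n : ℕ) (κ : ℝ) (q v : Fin (n + 1) → ℝ) (t : ℝ) :
    Fin (n + 1) → ℝ :=
  Real.cosh (Real.sqrt κ * t * hnorm n v) • q +
    (Real.sinh (Real.sqrt κ * t * hnorm n v) / (Real.sqrt κ * hnorm n v)) • v

lemma lform_comm (n : ℕ) (x y : Fin (n + 1) → ℝ) : lform n x y = lform n y x := by
  unfold lform
  simp [mul_comm]

lemma lform_smul_add (n : ℕ) (x y z : Fin (n + 1) → ℝ) (a b : ℝ) :
    lform n x (a • y + b • z) = a * lform n x y + b * lform n x z := by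
  unfold lform
  simp only [Pi.add_apply, Pi.smul_apply, smul_eq_mul, mul_add, Finset.sum_add_distrib,
    Finset.mul_sum]
  rw [show (∑ i : Fin n, x i.castSucc * (a * y i.castSucc))
      = a * ∑ i : Fin n, x i.castSucc * y i.castSucc from by
        rw [Finset.mul_sum]; exact Finset.sum_congr rfl fun i _ => by ring,
    show (∑ i : Fin n, x i.castSucc * (b * z i.castSucc))
      = b * ∑ i : Fin n, x i.castSucc * z i.castSucc from by
        rw [Finset.mul_sum]; exact Finset.sum_congr rfl fun i _ => by ring]
  ring

lemma key_alg (s Nv a b t : ℝ) (hs : 0 < s) (hN : 0 < Nv) :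
    -(s * s * (Real.cosh (s * t * Nv) * a + Real.sinh (s * t * Nv) / (s * Nv) * b)) *
        Real.exp (-(s * Nv * t)) =
      ((-(s * s * a)) + (-(s * b / Nv))) / 2 +
        ((-(s * s * a)) - (-(s * b / Nv))) / 2 * Real.exp (-(2 * (s * Nv * t))) := by
  have h1 : s * t * Nv = s * Nv * t := by ring
  have h2 : Real.exp (-(2 * (s * Nv * t))) = (Real.exp (s * Nv * t))⁻¹ ^ 2 := by
    rw [show -(2 * (s * Nv * t)) = -(s * Nv * t) + -(s * Nv * t) by ring, Real.exp_add,
      Real.exp_neg, sq]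
  rw [h1, Real.cosh_eq, Real.sinh_eq, Real.exp_neg, h2]
  have he := (Real.exp_pos (s * Nv * t)).ne'
  field_simp
  ring


set_option maxHeartbeats 1000000 in
/-- For `p, q ∈ H^n_κ` and a nonzero tangent vector `v` at `q`,
the quantity `−⟨p, κq + (√κ/‖v‖)v⟩_L` is positive, and the Busemann limit is
`lim_{t→+∞} (d_κ(p, exp_q(tv)) − ‖v‖t) = (1/√κ)·ln(−⟨p, κq + (√κ/‖v‖)v⟩_L)`. -/
theorem busemann_limit_hyperbolic (n : ℕ) (hn : 1 ≤ n) (κ : ℝ) (hκ : 0 < κ)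
    (p q v : Fin (n + 1) → ℝ) (hp : p ∈ Hyp n κ) (hq : q ∈ Hyp n κ)
    (hqv : lform n q v = 0) (hv : v ≠ 0) :
    0 < -(lform n p (κ • q + (Real.sqrt κ / hnorm n v) • v)) ∧
      Tendsto (fun t : ℝ => hdist n κ p (hexp n κ q v t) - hnorm n v * t) atTop
        (𝓝 ((1 / Real.sqrt κ) *
          Real.log (-(lform n p (κ • q + (Real.sqrt κ / hnorm n v) • v))))) := by
  obtain ⟨hpp, hpl⟩ := hp
  obtain ⟨hqq, hql⟩ := hq
  have hκ' : 0 < 1 / κ := by positivity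
  have hs : 0 < Real.sqrt κ := Real.sqrt_pos.mpr hκ
  have hss : Real.sqrt κ * Real.sqrt κ = κ := Real.mul_self_sqrt hκ.le
  have sqsum : ∀ x : Fin (n+1) → ℝ,
      (∑ i : Fin n, x i.castSucc * x i.castSucc) = ∑ i : Fin n, x i.castSucc ^ 2 :=
    fun x => Finset.sum_congr rfl fun i _ => (sq (x i.castSucc)).symm
  have hP : (∑ i : Fin n, p i.castSucc ^ 2) - p (Fin.last n) * p (Fin.last n) = -(1/κ) := by
    rw [← sqsum]; exact hpp
  have hQ : (∑ i : Fin n, q i.castSucc ^ 2) - q (Fin.last n) * q (Fin.last n) = -(1/κ) := by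
    rw [← sqsum]; exact hqq
  have hQV : (∑ i : Fin n, q i.castSucc * v i.castSucc) = q (Fin.last n) * v (Fin.last n) := by
    have h := hqv; unfold lform at h; linarith only [h]
  have csqv : (q (Fin.last n) * v (Fin.last n)) ^ 2
      ≤ (∑ i : Fin n, q i.castSucc ^ 2) * ∑ i : Fin n, v i.castSucc ^ 2 := by
    rw [← hQV]
    exact Finset.sum_mul_sq_le_sq_mul_sq Finset.univ _ _
  set Pn := p (Fin.last n) with hPn
  set Qn := q (Fin.last n) with hQn
  set Vn := v (Fin.last n) with hVn
  set Sp := ∑ i : Fin n, p i.castSucc ^ 2 with hSpdef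
  set Sq := ∑ i : Fin n, q i.castSucc ^ 2 with hSqdef
  set Sv := ∑ i : Fin n, v i.castSucc ^ 2 with hSvdef
  have hSp0 : 0 ≤ Sp := Finset.sum_nonneg fun _ _ => sq_nonneg _
  have hSq0 : 0 ≤ Sq := Finset.sum_nonneg fun _ _ => sq_nonneg _
  have hSv0 : 0 ≤ Sv := Finset.sum_nonneg fun _ _ => sq_nonneg _
  -- Sv > 0
  have hSv_pos : 0 < Sv := by
    rcases hSv0.lt_or_eq with h | h
    · exact h
    · exfalso
      have hz : ∀ i : Fin n, v i.castSucc = 0 := by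
        intro i
        have h0 := (Finset.sum_eq_zero_iff_of_nonneg
          (fun j _ => sq_nonneg (v (Fin.castSucc j)))).mp h.symm i (Finset.mem_univ i)
        exact pow_eq_zero_iff (n := 2) (by norm_num) |>.mp h0
      have hVn0 : Vn = 0 := by
        have hsum0 : (∑ i : Fin n, q i.castSucc * v i.castSucc) = 0 :=
          Finset.sum_eq_zero fun i _ => by rw [hz i, mul_zero]
        have h1 := hQV
        rw [hsum0] at h1
        rcases mul_eq_zero.mp h1.symm with h' | h'
        · exact absurd h' hql.ne'
        · exact h'
      apply hv
      funext i
      refine Fin.lastCases ?_ ?_ i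
      · exact hVn0
      · intro j; exact hz j
  have hlv : lform n v v = Sv - Vn * Vn := by unfold lform; rw [sqsum]
  -- v is spacelike
  have hQn2 : Qn * Qn = Sq + 1/κ := by linarith only [hQ]
  have c2 : (Sq + 1/κ) * (Vn * Vn) ≤ Sq * Sv := by
    calc (Sq + 1/κ) * (Vn * Vn) = (Qn * Vn)^2 := by rw [← hQn2]; ring
      _ ≤ Sq * Sv := csqv
  have hVnSv : Vn * Vn < Sv := by
    nlinarith only [c2, hSv_pos, hSq0, hκ', sq_nonneg Vn]
  have hvv : 0 < lform n v v := by
    rw [hlv]; linarith only [hVnSv]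
  set N := hnorm n v with hNdef
  have hN : 0 < N := Real.sqrt_pos.mpr hvv
  have hN2 : N * N = lform n v v := Real.mul_self_sqrt hvv.le
  -- the null vector w
  set w := κ • q + (Real.sqrt κ / N) • v with hwdef
  have hlpw : lform n p w = κ * lform n p q + (Real.sqrt κ / N) * lform n p v :=
    lform_smul_add n p q v κ (Real.sqrt κ / N)
  have e1 : Real.sqrt κ / N * (Real.sqrt κ / N) * lform n v v = κ := by
    rw [div_mul_div_comm, hss, ← hN2]
    exact div_mul_cancel₀ κ (mul_pos hN hN).ne'
  have hk1 : κ * -(1/κ) = -1 := by field_simp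
  have hlww : lform n w w = 0 := by
    rw [hwdef, lform_smul_add, lform_comm n (κ • q + (Real.sqrt κ / N) • v) q,
      lform_comm n (κ • q + (Real.sqrt κ / N) • v) v, lform_smul_add, lform_smul_add,
      hqq, hqv, lform_comm n v q, hqv]
    linear_combination κ * hk1 + e1
  -- last coordinate of w is positive
  have hwn_def : w (Fin.last n) = κ * Qn + (Real.sqrt κ / N) * Vn := by
    rw [hwdef]; simp [Pi.add_apply, Pi.smul_apply, smul_eq_mul]; rfl
  set Wn := w (Fin.last n) with hWndef
  have hQ2 : κ * (Qn * Qn - Sq) = 1 := by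
    rw [show Qn * Qn - Sq = 1/κ by linarith only [hQ]]; field_simp
  have hkey : Vn * Vn < κ * (Qn * Qn) * (lform n v v) := by
    rw [hlv]
    have m1 : κ * (Qn * Vn)^2 ≤ κ * (Sq * Sv) := mul_le_mul_of_nonneg_left csqv hκ.le
    have expand : κ * (Qn * Qn) * (Sv - Vn * Vn) - Vn * Vn
        = (κ * (Sq * Sv) - κ * (Qn * Vn)^2) + (Sv - Vn * Vn) := by
      linear_combination Sv * hQ2
    linarith only [m1, hVnSv, expand]
  have hWn : 0 < Wn := by
    have h1 : 0 < Real.sqrt κ * Qn * N := by positivity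
    have h2 : Vn * Vn < (Real.sqrt κ * Qn * N) * (Real.sqrt κ * Qn * N) := by
      calc Vn * Vn < κ * (Qn * Qn) * (lform n v v) := hkey
        _ = (Real.sqrt κ * Qn * N) * (Real.sqrt κ * Qn * N) := by
          linear_combination (-(Qn * Qn * N * N)) * hss + (-(κ * Qn * Qn)) * hN2
    have h3 : 0 < Real.sqrt κ * Qn * N + Vn := by nlinarith only [h1, h2]
    have h4 : Wn * N = Real.sqrt κ * (Real.sqrt κ * Qn * N + Vn) := by
      have hdiv : Real.sqrt κ / N * Vn * N = Real.sqrt κ * Vn := by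
        rw [div_mul_eq_mul_div, div_mul_eq_mul_div, div_eq_iff hN.ne']
      rw [hwn_def, add_mul, hdiv]
      linear_combination (-(Qn * N)) * hss
    nlinarith only [mul_pos hs h3, h4, hN]
  -- spatial norm of w equals Wn
  have hSw : (∑ i : Fin n, w i.castSucc ^ 2) = Wn * Wn := by
    have h5 : lform n w w = (∑ i : Fin n, w i.castSucc ^ 2) - Wn * Wn := by
      unfold lform; rw [sqsum]
    rw [h5] at hlww
    linarith only [hlww]
  -- positivity of c
  have hPV : (∑ i : Fin n, p i.castSucc * w i.castSucc) ^ 2 ≤ Sp * (Wn * Wn) := by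
    rw [← hSw, hSpdef]
    exact Finset.sum_mul_sq_le_sq_mul_sq Finset.univ _ _
  have hc : 0 < -(lform n p w) := by
    have hlp : lform n p w = (∑ i : Fin n, p i.castSucc * w i.castSucc) - Pn * Wn := by
      unfold lform; rfl
    rw [hlp]
    set U := ∑ i : Fin n, p i.castSucc * w i.castSucc with hU
    have hPnSp : Sp < Pn * Pn := by linarith only [hP, hκ']
    have h6 : U * U < (Pn * Wn) * (Pn * Wn) := by
      nlinarith only [hPV, hPnSp, mul_pos hWn hWn]
    nlinarith only [mul_pos hpl hWn, h6]
  refine ⟨hc, ?_⟩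
  -- the limit
  set a := lform n p q with ha
  set b := lform n p v with hb
  set c := -(lform n p w) with hcdef
  have hcab : c = (-(κ * a)) + (-(Real.sqrt κ * b / N)) := by
    rw [hcdef, hlpw]; field_simp; ring
  set ω := Real.sqrt κ * N with hω
  have hωpos : 0 < ω := by positivity
  have hXval : ∀ t : ℝ, lform n p (hexp n κ q v t)
      = Real.cosh (Real.sqrt κ * t * N) * a
        + Real.sinh (Real.sqrt κ * t * N) / (Real.sqrt κ * N) * b := by
    intro t
    rw [show hexp n κ q v t = Real.cosh (Real.sqrt κ * t * N) • q
        + (Real.sinh (Real.sqrt κ * t * N) / (Real.sqrt κ * N)) • v from rfl,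
      lform_smul_add]
  set X : ℝ → ℝ := fun t => -(κ * (Real.cosh (Real.sqrt κ * t * N) * a
      + Real.sinh (Real.sqrt κ * t * N) / (Real.sqrt κ * N) * b)) with hX
  set E : ℝ → ℝ := fun t => Real.exp (-(ω * t)) with hE
  have hEpos : ∀ t, 0 < E t := fun t => Real.exp_pos _
  have hFid : ∀ t : ℝ, X t * E t
      = ((-(κ * a)) + (-(Real.sqrt κ * b / N))) / 2
        + ((-(κ * a)) - (-(Real.sqrt κ * b / N))) / 2 * Real.exp (-(2 * (ω * t))) := by
    intro t
    have h7 := key_alg (Real.sqrt κ) N a b t hs hN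
    rw [hss] at h7
    simpa [hX, hE, hω, mul_assoc] using h7
  have hlin : Tendsto (fun t : ℝ => ω * t) atTop atTop :=
    Tendsto.const_mul_atTop hωpos tendsto_id
  have hE0 : Tendsto E atTop (𝓝 0) := by
    rw [hE]
    exact Real.tendsto_exp_atBot.comp (tendsto_neg_atBot_iff.mpr hlin)
  have hE20 : Tendsto (fun t : ℝ => Real.exp (-(2 * (ω * t)))) atTop (𝓝 0) := by
    apply Real.tendsto_exp_atBot.comp
    exact tendsto_neg_atBot_iff.mpr (Tendsto.const_mul_atTop two_pos hlin)
  have hF : Tendsto (fun t => X t * E t) atTop (𝓝 (c / 2)) := by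
    have h8 : Tendsto (fun t : ℝ => ((-(κ * a)) + (-(Real.sqrt κ * b / N))) / 2
        + ((-(κ * a)) - (-(Real.sqrt κ * b / N))) / 2 * Real.exp (-(2 * (ω * t)))) atTop
        (𝓝 (((-(κ * a)) + (-(Real.sqrt κ * b / N))) / 2
          + ((-(κ * a)) - (-(Real.sqrt κ * b / N))) / 2 * 0)) :=
      tendsto_const_nhds.add (tendsto_const_nhds.mul hE20)
    rw [mul_zero, add_zero] at h8
    rw [show c / 2 = ((-(κ * a)) + (-(Real.sqrt κ * b / N))) / 2 by rw [hcab]]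
    exact Tendsto.congr (fun t => (hFid t).symm) h8
  set G : ℝ → ℝ := fun t => X t * E t + Real.sqrt ((X t * E t) ^ 2 - (E t) ^ 2) with hG
  have hGlim : Tendsto G atTop (𝓝 c) := by
    have hsq : Tendsto (fun t => (X t * E t) ^ 2 - (E t) ^ 2) atTop (𝓝 ((c/2)^2 - 0^2)) :=
      (hF.pow 2).sub (hE0.pow 2)
    have h2 : Tendsto (fun t => Real.sqrt ((X t * E t) ^ 2 - (E t) ^ 2)) atTop
        (𝓝 (Real.sqrt ((c/2)^2 - 0^2))) := hsq.sqrt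
    have h3 : Real.sqrt ((c/2)^2 - 0^2) = c/2 := by
      rw [show (c/2)^2 - (0:ℝ)^2 = (c/2)^2 by ring, Real.sqrt_sq (by positivity)]
    rw [h3] at h2
    have h9 := hF.add h2
    rw [show c/2 + c/2 = c by ring] at h9
    exact h9
  have hGpos : ∀ᶠ t in atTop, 0 < G t := hGlim.eventually (eventually_gt_nhds hc)
  have hlog : Tendsto (fun t => (1 / Real.sqrt κ) * Real.log (G t)) atTop
      (𝓝 ((1 / Real.sqrt κ) * Real.log c)) :=
    Tendsto.const_mul _ ((Real.continuousAt_log hc.ne').tendsto.comp hGlim)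
  have hfinal : Tendsto (fun t : ℝ => hdist n κ p (hexp n κ q v t) - N * t) atTop
      (𝓝 ((1 / Real.sqrt κ) * Real.log c)) := by
    refine hlog.congr' ?_
    filter_upwards [hGpos] with t hGt
    have hXt : -(κ * lform n p (hexp n κ q v t)) = X t := by rw [hXval t, hX]
    have hsqrtE : Real.sqrt ((X t)^2 - 1) * E t = Real.sqrt ((X t * E t)^2 - (E t)^2) := by
      rw [show (X t * E t)^2 - (E t)^2 = ((X t)^2 - 1) * (E t)^2 by ring,
        Real.sqrt_mul' _ (sq_nonneg (E t)), Real.sqrt_sq (hEpos t).le]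
    have hGfac : G t = (X t + Real.sqrt ((X t)^2 - 1)) * E t := by
      simp only [hG]
      rw [← hsqrtE]; ring
    have hXpos : 0 < X t + Real.sqrt ((X t)^2 - 1) := by
      have h10 := hGt
      rw [hGfac] at h10
      nlinarith only [h10, hEpos t]
    have hlogG : Real.log (G t) = Real.log (X t + Real.sqrt ((X t)^2 - 1)) + (-(ω * t)) := by
      rw [hGfac, Real.log_mul hXpos.ne' (hEpos t).ne']
      simp [hE, Real.log_exp]
    have h11 : (1 / Real.sqrt κ) * (ω * t) = N * t := by
      rw [hω]; field_simp
    rw [hdist, hXt, arcosh, hlogG, mul_add,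
      show (1 / Real.sqrt κ) * -(ω * t) = -((1 / Real.sqrt κ) * (ω * t)) by ring, h11]
    ring
  exact hfinal
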